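/- Let X be a cluster-tilting subcategory of a triangulated category C with split idempotents, and let A₀ →f₀ A₁ →f₁ A₂ →f₂ ΣA₀ be a distinguished triangle in C. If f̄₀ is a monomorphism in the quotient category C/X, then f₁ is X-epic, i.e. every morphism from an object of X to A₂ factors through f₁. -/

import Mathlib

open CategoryTheory CategoryTheory.Limits CategoryTheory.Pretriangulated

universe v u

variable {C : Type u} [Category.{v} C] [Preadditive C] [HasZeroObject C]
  [HasShift C ℤ] [∀ n : ℤ, (shiftFunctor C n).Additive] [Pretriangulated C]

/-- `f` factors through an object satisfying `X`. -/
def FactorsThru (X : C → Prop) {A B : C} (f : A ⟶ B) : Prop :=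
  ∃ (X₀ : C) (g : A ⟶ X₀) (h : X₀ ⟶ B), X X₀ ∧ g ≫ h = f

/-- The hom relation on `C` identifying two morphisms when their difference factors
through an object of `X`; the quotient category `C/X` is the quotient by this relation. -/
def homRelOf (X : C → Prop) : HomRel C :=
  fun {A B : C} (f g : A ⟶ B) => FactorsThru X (f - g)

/-- The additive quotient category `C/X`. -/
abbrev QuotCat (X : C → Prop) := CategoryTheory.Quotient (homRelOf X)

/-- The quotient functor `C ⥤ C/X`, sending a morphism `f` to its class `f̄`. -/
abbrev quotFunctor (X : C → Prop) : C ⥤ QuotCat X := Quotient.functor _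

/-- `X` is a full additive subcategory: it contains the zero objects and is closed under
isomorphisms, finite direct sums and direct summands. -/
structure IsAdditiveClosed (X : C → Prop) : Prop where
  zero : ∀ Z : C, IsZero Z → X Z
  iso : ∀ {A B : C}, (A ≅ B) → X A → X B
  biprod : ∀ {A B : C} (b : BinaryBicone A B), Nonempty b.IsBilimit → X A → X B → X b.pt
  summand : ∀ {A B : C} (i : A ⟶ B) (p : B ⟶ A), i ≫ p = 𝟙 A → X B → X A

/-- `X` is a cluster-tilting subcategory of the triangulated category `C`:
it is a full additive subcategory such that (i) `Hom(X₁, ΣX₂) = 0` for all `X₁, X₂ ∈ X`, and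
(ii) every object `A` fits into a distinguished triangle `X₀ ⟶ X₁ ⟶ A ⟶ ΣX₀` with
`X₀, X₁ ∈ X`. -/
structure IsClusterTilting (X : C → Prop) extends IsAdditiveClosed X : Prop where
  hom_shift_zero : ∀ {X₁ X₂ : C}, X X₁ → X X₂ → ∀ f : X₁ ⟶ X₂⟦(1 : ℤ)⟧, f = 0
  exists_triangle : ∀ A : C, ∃ (X₀ X₁ : C) (f : X₀ ⟶ X₁) (g : X₁ ⟶ A) (h : A ⟶ X₀⟦(1 : ℤ)⟧),
    X X₀ ∧ X X₁ ∧ Triangle.mk f g h ∈ distTriang C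

/-- `f : A ⟶ B` is `X`-monic: every morphism from `A` to an object of `X` factors through `f`. -/
def XMonic (X : C → Prop) {A B : C} (f : A ⟶ B) : Prop :=
  ∀ X' : C, X X' → ∀ u : A ⟶ X', ∃ v : B ⟶ X', f ≫ v = u

/-- `f : A ⟶ B` is `X`-epic: every morphism from an object of `X` to `B` factors through `f`. -/
def XEpic (X : C → Prop) {A B : C} (f : A ⟶ B) : Prop :=
  ∀ X' : C, X X' → ∀ u : X' ⟶ B, ∃ v : X' ⟶ A, v ≫ f = u

lemma congruence_homRelOf (X : C → Prop) (hX : IsAdditiveClosed X) :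
    Congruence (homRelOf X) where
  equivalence := by
    intro A B
    constructor
    · intro f
      obtain ⟨Z, hZ⟩ := HasZeroObject.zero (C := C)
      exact ⟨Z, 0, 0, hX.zero Z hZ, by simp⟩
    · rintro f g ⟨X₀, p, q, h₁, h₂⟩
      exact ⟨X₀, -p, q, h₁, by rw [Preadditive.neg_comp, h₂, neg_sub]⟩
    · rintro f g h ⟨X₁, p₁, q₁, m₁, e₁⟩ ⟨X₂, p₂, q₂, m₂, e₂⟩
      refine ⟨X₁ ⊞ X₂, biprod.lift p₁ p₂, biprod.desc q₁ q₂,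
        hX.biprod (BinaryBiproduct.bicone X₁ X₂) ⟨BinaryBiproduct.isBilimit X₁ X₂⟩ m₁ m₂, ?_⟩
      rw [biprod.lift_desc, e₁, e₂]
      abel
  comp_left := by
    rintro A B Z f g g' ⟨X₀, p, q, h₁, h₂⟩
    exact ⟨X₀, f ≫ p, q, h₁, by rw [Category.assoc, h₂, Preadditive.comp_sub]⟩
  comp_right := by
    rintro A B Z f f' g ⟨X₀, p, q, h₁, h₂⟩
    refine ⟨X₀, p, q ≫ g, h₁, ?_⟩
    rw [← Category.assoc, h₂, Preadditive.sub_comp]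

/-- For a distinguished triangle `A₀ ⟶ A₁ ⟶ A₂ ⟶ ΣA₀` over a cluster-tilting
subcategory `X`, if `f̄₀` is a monomorphism in `C/X` then `f₁` is `X`-epic. -/
theorem xepic_of_mono [IsIdempotentComplete C]
    (X : C → Prop) (hX : IsClusterTilting X)
    {A₀ A₁ A₂ : C} (f₀ : A₀ ⟶ A₁) (f₁ : A₁ ⟶ A₂) (f₂ : A₂ ⟶ A₀⟦(1 : ℤ)⟧)
    (hT : Triangle.mk f₀ f₁ f₂ ∈ distTriang C)
    (hmono : Mono ((quotFunctor X).map f₀)) :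
    XEpic X f₁ := by
  intro X' hX' u
  haveI := congruence_homRelOf X hX.toIsAdditiveClosed
  haveI := hmono
  set e := shiftEquiv C (1 : ℤ) with he
  have hw1 : (u ≫ f₂) ≫ (shiftFunctor C (1 : ℤ)).map f₀ = 0 := by
    have h := comp_distTriang_mor_zero₃₁ _ hT
    change f₂ ≫ (shiftFunctor C (1 : ℤ)).map f₀ = 0 at h
    rw [Category.assoc, h, comp_zero]
  set a : (shiftFunctor C (-1 : ℤ)).obj X' ⟶ A₀ :=
    (shiftFunctor C (-1 : ℤ)).map (u ≫ f₂) ≫ e.unitIso.inv.app A₀ with ha_def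
  have ha : a ≫ f₀ = 0 := by
    have hnat : e.unitIso.inv.app A₀ ≫ f₀ =
        (shiftFunctor C (-1 : ℤ)).map ((shiftFunctor C (1 : ℤ)).map f₀) ≫
          e.unitIso.inv.app A₁ := (e.unitIso.inv.naturality f₀).symm
    erw [ha_def, Category.assoc, hnat, ← Category.assoc,
      ← (shiftFunctor C (-1 : ℤ)).map_comp, hw1, (shiftFunctor C (-1 : ℤ)).map_zero, zero_comp]
  have hq : (quotFunctor X).map a
      = (quotFunctor X).map (0 : (shiftFunctor C (-1 : ℤ)).obj X' ⟶ A₀) := by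
    rw [← cancel_mono ((quotFunctor X).map f₀), ← (quotFunctor X).map_comp,
      ← (quotFunctor X).map_comp, ha, zero_comp]
  rw [Quotient.functor_map_eq_iff] at hq
  obtain ⟨X₀, b, c, hX₀, hbc⟩ := hq
  rw [sub_zero] at hbc
  have hb : (shiftFunctor C (1 : ℤ)).map b = 0 := by
    have h0 : e.counitIso.inv.app X' ≫ (shiftFunctor C (1 : ℤ)).map b = 0 :=
      hX.hom_shift_zero hX' hX₀ _
    exact (cancel_epi (e.counitIso.inv.app X')).1 (by erw [h0, comp_zero])
  have hmap : (shiftFunctor C (-1 : ℤ)).map (u ≫ f₂)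
      = b ≫ (c ≫ e.unitIso.hom.app A₀) := by
    have h1 : a ≫ e.unitIso.hom.app A₀ = (shiftFunctor C (-1 : ℤ)).map (u ≫ f₂) := by
      erw [ha_def, Category.assoc, Iso.inv_hom_id_app]
      exact Category.comp_id _
    rw [← h1, ← hbc, Category.assoc]
  have hw0 : u ≫ f₂ = 0 := by
    have hnat : (shiftFunctor C (1 : ℤ)).map ((shiftFunctor C (-1 : ℤ)).map (u ≫ f₂)) ≫
        e.counitIso.hom.app (A₀⟦(1 : ℤ)⟧) = e.counitIso.hom.app X' ≫ (u ≫ f₂) :=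
      e.counitIso.hom.naturality (u ≫ f₂)
    calc u ≫ f₂
        = e.counitIso.inv.app X' ≫ e.counitIso.hom.app X' ≫ (u ≫ f₂) := by
          rw [← Category.assoc, Iso.inv_hom_id_app, Category.id_comp]
      _ = e.counitIso.inv.app X' ≫
            (shiftFunctor C (1 : ℤ)).map ((shiftFunctor C (-1 : ℤ)).map (u ≫ f₂)) ≫
            e.counitIso.hom.app (A₀⟦(1 : ℤ)⟧) := by erw [hnat]
      _ = 0 := by
          erw [hmap, (shiftFunctor C (1 : ℤ)).map_comp, hb, zero_comp, zero_comp, comp_zero]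
  obtain ⟨v, hv⟩ := Triangle.coyoneda_exact₃ _ hT u hw0
  exact ⟨v, hv.symm⟩
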